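/- Let C be a real constant and A(t) = C / (2 e^{Ct} + 1). Then u(x,t) = e^{Ct}(x + 1) solves ∂_t u - A(t) ∂_x(u²) = ∂_xx u + A(t) u on ℝ × ℝ. -/

import Mathlib

theorem burgers_mittag_leffler_solution (C : ℝ) (A : ℝ → ℝ)
    (hA : ∀ t, A t = C / (2 * Real.exp (C * t) + 1))
    (u : ℝ → ℝ → ℝ) (hu : ∀ x t, u x t = Real.exp (C * t) * (x + 1)) :
    ∀ x t : ℝ,
      deriv (fun s : ℝ => u x s) t - A t * deriv (fun y : ℝ => (u y t) ^ 2) x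
        = deriv (fun y : ℝ => deriv (fun z : ℝ => u z t) y) x + A t * u x t := by
  intro x t
  simp only [hu, hA]
  set e := Real.exp (C * t) with he
  have h1 : deriv (fun s : ℝ => Real.exp (C * s) * (x + 1)) t = C * e * (x + 1) := by
    have hd : HasDerivAt (fun s : ℝ => Real.exp (C * s)) (Real.exp (C * t) * C) t := by
      simpa [Function.comp_def] using (Real.hasDerivAt_exp (C * t)).comp t ((hasDerivAt_id t).const_mul C)
    have := (hd.mul_const (x + 1)).deriv
    rw [this]; ring
  have hx : ∀ y : ℝ, HasDerivAt (fun z : ℝ => e * (z + 1)) e y := fun y => by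
    simpa using ((hasDerivAt_id y).add_const 1).const_mul e
  have h2 : deriv (fun y : ℝ => (e * (y + 1)) ^ 2) x = 2 * e * e * (x + 1) := by
    have := ((hx x).pow 2).deriv
    rw [show (fun y : ℝ => (e * (y + 1)) ^ 2) = (fun z : ℝ => e * (z + 1)) ^ 2 from rfl, this]; norm_num; ring
  have h3 : deriv (fun y : ℝ => deriv (fun z : ℝ => e * (z + 1)) y) x = 0 := by
    have : (fun y : ℝ => deriv (fun z : ℝ => e * (z + 1)) y) = fun _ : ℝ => e :=
      funext fun y => (hx y).deriv
    rw [this, deriv_const]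
  rw [h1, h2, h3]
  have hne : 2 * e + 1 ≠ 0 := by positivity
  have hne2 : e * 2 + 1 ≠ 0 := by rw [mul_comm]; exact hne
  field_simp
  ring
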